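/- Let A be an invertible N×N real matrix, b ∈ ℝ^N, ε > 0, and f(x) = A x − b. Suppose x₀ ∈ ℝ^N and x₁, x₂, … are generated by the modified full-memory NKA iteration with safeguard parameter ε, and suppose A x_j ≠ b for 0 ≤ j ≤ n (the iteration has not yet found the solution). Let r_n^G = A x_n^G − b denote the n-th GMRES residual for A x = b with starting point x₀, and let r_{n+1} = A x_{n+1} − b denote the (n+1)-st NKA residual. Then ‖r_{n+1}‖₂ ≤ (1 + ε) · ‖I − A‖ · ‖r_n^G‖₂. -/

import Mathlib

private lemma abs_le_of_pm (a d M : ℝ) (h1 : |a + d| ≤ M) (h2 : |a - d| ≤ M) : |d| ≤ M := by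
  have h3 : |(a+d) - (a-d)| ≤ |a+d| + |a-d| := abs_sub _ _
  have h4 : (a+d) - (a-d) = 2*d := by ring
  rw [h4, abs_mul] at h3
  simp at h3
  cases abs_cases d <;> cases abs_cases (2*d) <;> linarith

set_option maxHeartbeats 1000000 in
theorem stmt_2 (N : ℕ)
    (A : EuclideanSpace ℝ (Fin N) →L[ℝ] EuclideanSpace ℝ (Fin N))
    (hA : Function.Bijective ⇑A)
    (b : EuclideanSpace ℝ (Fin N)) (ε : ℝ) (hε : 0 < ε)
    (x : ℕ → EuclideanSpace ℝ (Fin N))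
    (z z' : (i : ℕ) → Fin i → ℝ)
    (hx1 : x 1 = x 0 - (A (x 0) - b))
    (hmin : ∀ i : ℕ, 1 ≤ i → ∀ y : Fin i → ℝ,
      ‖(A (x i) - b) - ∑ j : Fin i, z i j • A (x j.1 - x (j.1 + 1))‖ ≤
        ‖(A (x i) - b) - ∑ j : Fin i, y j • A (x j.1 - x (j.1 + 1))‖)
    (hagree : ∀ i : ℕ, 1 ≤ i → ∀ j : Fin i, j.1 + 1 ≠ i → z' i j = z i j)
    (hsafe : ∀ i : ℕ, 1 ≤ i → ∀ j : Fin i, j.1 + 1 = i →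
      (A (x j.1 - x (j.1 + 1)) ≠ 0 →
        ∃ s : ℝ, (s = 1 ∨ s = -1) ∧
          z' i j = z i j + s * ε *
            ‖(A (x i) - b) - ∑ l : Fin i, z i l • A (x l.1 - x (l.1 + 1))‖ /
              ‖A (x j.1 - x (j.1 + 1))‖ ∧
          ∀ t : ℝ, (t = 1 ∨ t = -1) →
            |z i j + t * ε *
              ‖(A (x i) - b) - ∑ l : Fin i, z i l • A (x l.1 - x (l.1 + 1))‖ /
                ‖A (x j.1 - x (j.1 + 1))‖ + 1| ≤ |z' i j + 1|) ∧
      (A (x j.1 - x (j.1 + 1)) = 0 → z' i j = z i j))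
    (hupd : ∀ i : ℕ, 1 ≤ i →
      x (i + 1) = x i - (∑ j : Fin i, z' i j • (x j.1 - x (j.1 + 1)) +
        ((A (x i) - b) - ∑ j : Fin i, z' i j • A (x j.1 - x (j.1 + 1)))))
    (n : ℕ)
    (hsol : ∀ j : ℕ, j ≤ n → A (x j) ≠ b)
    (xG : ℕ → EuclideanSpace ℝ (Fin N))
    (hGmem : ∀ j : ℕ, xG j - x 0 ∈
      Submodule.span ℝ (Set.range fun k : Fin j => (A ^ k.1) (A (x 0) - b)))
    (hGmin : ∀ j : ℕ, ∀ u : EuclideanSpace ℝ (Fin N),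
      u - x 0 ∈ Submodule.span ℝ (Set.range fun k : Fin j => (A ^ k.1) (A (x 0) - b)) →
      ‖A (xG j) - b‖ ≤ ‖A u - b‖) :
    ‖A (x (n + 1)) - b‖ ≤
      (1 + ε) * ‖(1 : EuclideanSpace ℝ (Fin N) →L[ℝ] EuclideanSpace ℝ (Fin N)) - A‖ *
        ‖A (xG n) - b‖ := by
  classical
  set K : ℕ → Submodule ℝ (EuclideanSpace ℝ (Fin N)) :=
    fun j => Submodule.span ℝ (Set.range fun k : Fin j => (A ^ k.1) (A (x 0) - b)) with hKdef
  set V : ℕ → Submodule ℝ (EuclideanSpace ℝ (Fin N)) :=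
    fun i => Submodule.span ℝ (Set.range fun j : Fin i => (x j.1 - x (j.1 + 1))) with hVdef
  -- generators of K
  have hgen : ∀ j k : ℕ, k < j → (A ^ k) (A (x 0) - b) ∈ K j := by
    intro j k hk
    exact Submodule.subset_span ⟨⟨k, hk⟩, rfl⟩
  have hr0K : ∀ j : ℕ, 1 ≤ j → (A (x 0) - b) ∈ K j := by
    intro j hj
    have := hgen j 0 hj
    simpa using this
  have hKmono : ∀ j j' : ℕ, j ≤ j' → K j ≤ K j' := by
    intro j j' hjj
    apply Submodule.span_le.2
    rintro u ⟨k, rfl⟩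
    exact hgen j' k.1 (lt_of_lt_of_le k.2 hjj)
  have hVmono : ∀ i i' : ℕ, i ≤ i' → V i ≤ V i' := by
    intro i i' hii
    apply Submodule.span_le.2
    rintro u ⟨k, rfl⟩
    exact Submodule.subset_span ⟨⟨k.1, lt_of_lt_of_le k.2 hii⟩, rfl⟩
  have hAK : ∀ j : ℕ, ∀ u ∈ K j, A u ∈ K (j + 1) := by
    intro j u hu
    have hm : Submodule.map A.toLinearMap (K j) ≤ K (j+1) := by
      rw [hKdef]
      rw [Submodule.map_span]
      apply Submodule.span_le.2
      rintro w ⟨u', ⟨k, rfl⟩, rfl⟩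
      have h1 : A.toLinearMap ((A ^ k.1) (A (x 0) - b)) = (A ^ (k.1+1)) (A (x 0) - b) := by
        simp [pow_succ']
      rw [h1]
      exact hgen (j+1) (k.1+1) (by omega)
    exact hm ⟨u, hu, rfl⟩
  -- telescoping
  have hx0i : ∀ i : ℕ, x 0 - x i = ∑ j : Fin i, (x j.1 - x (j.1 + 1)) := by
    intro i
    induction i with
    | zero => simp
    | succ i ih =>
      rw [Fin.sum_univ_castSucc]
      simp only [Fin.coe_castSucc, Fin.val_last]
      rw [← ih]
      abel
  have hf : ∀ i : ℕ, A (x i) - b =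
      (A (x 0) - b) - ∑ j : Fin i, A (x j.1 - x (j.1 + 1)) := by
    intro i
    have h1 : A (x 0) - A (x i) = ∑ j : Fin i, A (x j.1 - x (j.1 + 1)) := by
      rw [← map_sum, ← hx0i i, map_sub]
    rw [← h1]; abel
  -- v i for i ≥ 1
  have hv : ∀ i : ℕ, 1 ≤ i → x i - x (i + 1) =
      ∑ j : Fin i, z' i j • (x j.1 - x (j.1 + 1)) +
        ((A (x i) - b) - ∑ j : Fin i, z' i j • A (x j.1 - x (j.1 + 1))) := by
    intro i hi
    rw [hupd i hi]
    abel
  -- residual recursion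
  have hres : ∀ i : ℕ, 1 ≤ i → A (x (i + 1)) - b =
      ((1 : EuclideanSpace ℝ (Fin N) →L[ℝ] EuclideanSpace ℝ (Fin N)) - A)
        ((A (x i) - b) - ∑ j : Fin i, z' i j • A (x j.1 - x (j.1 + 1))) := by
    intro i hi
    rw [hupd i hi]
    simp only [map_sub, map_add, map_sum, map_smul, ContinuousLinearMap.sub_apply,
      ContinuousLinearMap.one_apply]
    simp only [smul_sub, Finset.sum_sub_distrib]
    abel
  -- main invariant
  have key : ∀ i : ℕ, i + 1 ≤ n →
      (∀ j : ℕ, j ≤ i → (x j - x (j + 1)) ∈ K (j + 1)) ∧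
      (K (i + 1) ≤ V (i + 1)) ∧
      ∃ c : ℝ, c ≠ 0 ∧ (x i - x (i + 1)) - c • (A ^ i) (A (x 0) - b) ∈ K i := by
    intro i
    induction i with
    | zero =>
      intro _
      have hv0 : x 0 - x 1 = A (x 0) - b := by rw [hx1]; abel
      refine ⟨?_, ?_, 1, one_ne_zero, ?_⟩
      · intro j hj
        have hj0 : j = 0 := Nat.le_zero.mp hj
        subst hj0
        rw [hv0]
        exact hr0K 1 le_rfl
      · apply Submodule.span_le.2
        rintro u ⟨k, rfl⟩
        beta_reduce
        have hk0 : k.1 = 0 := by omega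
        have h1 : (A ^ k.1) (A (x 0) - b) = x 0 - x 1 := by rw [hk0, hv0]; simp
        rw [h1]
        exact Submodule.subset_span ⟨⟨0, one_pos⟩, rfl⟩
      · rw [hv0]
        simpa using Submodule.zero_mem (K 0)
    | succ i ih =>
      intro hin
      obtain ⟨hvK, hKV, c, hc0, hcdec⟩ := ih (by omega)
      have hm1 : 1 ≤ i + 1 := Nat.le_add_left 1 i
      set ρ := ‖(A (x (i+1)) - b) - ∑ j : Fin (i+1), z (i+1) j • A (x j.1 - x (j.1 + 1))‖
        with hρ
      have hρnn : 0 ≤ ρ := by rw [hρ]; exact norm_nonneg _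
      -- Step A : ρ ≠ 0
      have hρne : ρ ≠ 0 := by
        intro h0
        have hzz : ∀ j : Fin (i+1), z' (i+1) j = z (i+1) j := by
          intro j
          by_cases hj : j.1 + 1 = i + 1
          · rcases hsafe (i+1) hm1 j hj with ⟨h1, h2⟩
            by_cases hw : A (x j.1 - x (j.1+1)) = 0
            · exact h2 hw
            · obtain ⟨s, hs, hz', _⟩ := h1 hw
              rw [hz', ← hρ, h0]
              ring
          · exact hagree (i+1) hm1 j hj
        have heq0 : (A (x (i+1)) - b) - ∑ j : Fin (i+1), z' (i+1) j • A (x j.1 - x (j.1+1))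
            = 0 := by
          have hss : (∑ j : Fin (i+1), z' (i+1) j • A (x j.1 - x (j.1+1)))
              = ∑ j : Fin (i+1), z (i+1) j • A (x j.1 - x (j.1+1)) :=
            Finset.sum_congr rfl (fun j _ => by rw [hzz j])
          rw [hss]
          have : ρ = 0 := h0
          rw [hρ] at this
          exact norm_eq_zero.mp this
        have hz2 : A (x (i+1+1)) - b = 0 := by
          rw [hres (i+1) hm1, heq0, map_zero]
        exact hsol (i+1+1) (by omega) (by rwa [sub_eq_zero] at hz2)
      have hρpos : 0 < ρ := lt_of_le_of_ne hρnn (Ne.symm hρne)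
      -- Step B : A^(i+1) r0 ∉ K (i+1)
      have hPnot : (A ^ (i+1)) (A (x 0) - b) ∉ K (i+1) := by
        intro hmem
        have hinv : Submodule.map A.toLinearMap (K (i+1)) ≤ K (i+1) := by
          rw [hKdef, Submodule.map_span]
          apply Submodule.span_le.2
          rintro w ⟨u', ⟨k, rfl⟩, rfl⟩
          have hh : A.toLinearMap ((A ^ k.1) (A (x 0) - b)) = (A ^ (k.1+1)) (A (x 0) - b) := by
            simp [pow_succ']
          rw [hh]
          rcases Nat.lt_or_ge (k.1+1) (i+1) with h | h
          · exact hgen (i+1) (k.1+1) h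
          · have hk1 : k.1 + 1 = i + 1 := by omega
            rw [hk1]
            exact hmem
        have hfin : Submodule.map A.toLinearMap (K (i+1)) = K (i+1) := by
          apply Submodule.eq_of_le_of_finrank_le hinv
          have he : Module.finrank ℝ (Submodule.map A.toLinearMap (K (i+1)))
              = Module.finrank ℝ (K (i+1)) :=
            (LinearEquiv.ofBijective A.toLinearMap hA).finrank_map_eq (K (i+1))
          rw [he]
        have hr0m : (A (x 0) - b) ∈ Submodule.map A.toLinearMap (K (i+1)) := by
          rw [hfin]; exact hr0K _ hm1
        obtain ⟨u, huK, huA⟩ := Submodule.mem_map.mp hr0m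
        have huV : u ∈ V (i+1) := hKV huK
        rw [hVdef] at huV
        obtain ⟨cu, hcu⟩ := (Submodule.mem_span_range_iff_exists_fun ℝ).mp huV
        have hr0sum : (A (x 0) - b) = ∑ j : Fin (i+1), cu j • A (x j.1 - x (j.1+1)) := by
          rw [← huA, ← hcu, map_sum]
          simp only [map_smul]
          rfl
        have hzero : (A (x (i+1)) - b)
            - ∑ j : Fin (i+1), (cu j - 1) • A (x j.1 - x (j.1+1)) = 0 := by
          rw [hf (i+1), hr0sum]
          simp only [sub_smul, one_smul, Finset.sum_sub_distrib]
          abel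
        have hy := hmin (i+1) hm1 (fun j => cu j - 1)
        rw [← hρ] at hy
        rw [hzero, norm_zero] at hy
        exact hρne (le_antisymm hy hρnn)
      -- decomposition of w_i
      have hwdec : A (x i - x (i+1)) - c • (A ^ (i+1)) (A (x 0) - b) ∈ K (i+1) := by
        have h1 := hAK i _ hcdec
        rw [map_sub, map_smul] at h1
        have hpow : A ((A ^ i) (A (x 0) - b)) = (A ^ (i+1)) (A (x 0) - b) := by
          simp [pow_succ']
        rwa [hpow] at h1
      -- Step C : w_i ≠ 0
      have hwne : A (x i - x (i+1)) ≠ 0 := by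
        intro hw0
        apply hPnot
        rw [hw0, zero_sub] at hwdec
        have h2 : c • (A ^ (i+1)) (A (x 0) - b) ∈ K (i+1) := by
          have := Submodule.neg_mem _ hwdec
          rwa [neg_neg] at this
        have h3 := Submodule.smul_mem _ c⁻¹ h2
        rwa [smul_smul, inv_mul_cancel₀ hc0, one_smul] at h3
      have hwpos : 0 < ‖A (x i - x (i+1))‖ := norm_pos_iff.mpr hwne
      -- Step D : safeguarded coefficient
      have hlastval : ((Fin.last i : Fin (i+1)) : ℕ) = i := Fin.val_last i
      obtain ⟨hsafe1, _⟩ := hsafe (i+1) hm1 (Fin.last i) (by simp)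
      obtain ⟨s, hs, hz', hmax⟩ := hsafe1 (by simpa [hlastval] using hwne)
      rw [← hρ] at hz' hmax
      simp only [hlastval] at hz' hmax
      have hzne : z' (i+1) (Fin.last i) + 1 ≠ 0 := by
        have h1 := hmax 1 (Or.inl rfl)
        have h2 := hmax (-1) (Or.inr rfl)
        have e1 : z (i+1) (Fin.last i) + 1 * ε * ρ / ‖A (x i - x (i+1))‖ + 1
            = (z (i+1) (Fin.last i) + 1) + ε * ρ / ‖A (x i - x (i+1))‖ := by ring
        have e2 : z (i+1) (Fin.last i) + (-1) * ε * ρ / ‖A (x i - x (i+1))‖ + 1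
            = (z (i+1) (Fin.last i) + 1) - ε * ρ / ‖A (x i - x (i+1))‖ := by ring
        rw [e1] at h1
        rw [e2] at h2
        have h3 := abs_le_of_pm _ _ _ h1 h2
        have hdpos : 0 < ε * ρ / ‖A (x i - x (i+1))‖ :=
          div_pos (mul_pos hε hρpos) hwpos
        intro h0
        rw [h0, abs_zero] at h3
        rw [abs_of_pos hdpos] at h3
        linarith
      -- Step E : decomposition identity for v (i+1)
      have hc'ne : -((z' (i+1) (Fin.last i) + 1) * c) ≠ 0 :=
        neg_ne_zero.mpr (mul_ne_zero hzne hc0)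
      have hiden : (x (i+1) - x (i+1+1))
            - (-((z' (i+1) (Fin.last i) + 1) * c)) • (A ^ (i+1)) (A (x 0) - b) =
          ((((A (x 0) - b) + ∑ j : Fin (i+1), z' (i+1) j • (x j.1 - x (j.1+1)))
            - ∑ j : Fin i, A (x j.1 - x (j.1+1)))
            - ∑ j : Fin i, z' (i+1) j.castSucc • A (x j.1 - x (j.1+1)))
            - (z' (i+1) (Fin.last i) + 1)
              • (A (x i - x (i+1)) - c • (A ^ (i+1)) (A (x 0) - b)) := by
        have h1 := hv (i+1) hm1
        rw [hf (i+1)] at h1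
        rw [h1]
        rw [Fin.sum_univ_castSucc (f := fun j : Fin (i+1) => A (x j.1 - x (j.1+1)))]
        rw [Fin.sum_univ_castSucc
          (f := fun j : Fin (i+1) => z' (i+1) j • A (x j.1 - x (j.1+1)))]
        simp only [Fin.coe_castSucc, Fin.val_last]
        module
      have hmem1 : (x (i+1) - x (i+1+1))
          - (-((z' (i+1) (Fin.last i) + 1) * c)) • (A ^ (i+1)) (A (x 0) - b) ∈ K (i+1) := by
        rw [hiden]
        refine Submodule.sub_mem _ (Submodule.sub_mem _ (Submodule.sub_mem _
          (Submodule.add_mem _ (hr0K (i+1) hm1) ?_) ?_) ?_) (Submodule.smul_mem _ _ hwdec)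
        · apply Submodule.sum_mem
          intro j _
          exact Submodule.smul_mem _ _
            (hKmono (j.1+1) (i+1) (by omega) (hvK j.1 (by omega)))
        · apply Submodule.sum_mem
          intro j _
          exact hKmono (j.1+1+1) (i+1) (by omega) (hAK (j.1+1) _ (hvK j.1 (by omega)))
        · apply Submodule.sum_mem
          intro j _
          exact Submodule.smul_mem _ _
            (hKmono (j.1+1+1) (i+1) (by omega) (hAK (j.1+1) _ (hvK j.1 (by omega))))
      refine ⟨?_, ?_, -((z' (i+1) (Fin.last i) + 1) * c), hc'ne, hmem1⟩
      · intro j hj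
        rcases Nat.lt_or_ge j (i+1) with h | h
        · exact hvK j (by omega)
        · have hji : j = i + 1 := by omega
          subst hji
          have hsplit : x (i+1) - x (i+1+1) =
              ((x (i+1) - x (i+1+1))
                - (-((z' (i+1) (Fin.last i) + 1) * c)) • (A ^ (i+1)) (A (x 0) - b))
              + (-((z' (i+1) (Fin.last i) + 1) * c)) • (A ^ (i+1)) (A (x 0) - b) := by
            abel
          rw [hsplit]
          exact Submodule.add_mem _ (hKmono (i+1) (i+1+1) (by omega) hmem1)
            (Submodule.smul_mem _ _ (hgen (i+1+1) (i+1) (by omega)))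
      · apply Submodule.span_le.2
        rintro u ⟨k, rfl⟩
        beta_reduce
        rcases Nat.lt_or_ge k.1 (i+1) with h | h
        · exact hVmono (i+1) (i+1+1) (by omega) (hKV (hgen (i+1) k.1 h))
        · have hk : k.1 = i+1 := by omega
          rw [hk]
          have heq2 : (A ^ (i+1)) (A (x 0) - b) =
              (-((z' (i+1) (Fin.last i) + 1) * c))⁻¹ •
                ((x (i+1) - x (i+1+1)) - ((x (i+1) - x (i+1+1))
                  - (-((z' (i+1) (Fin.last i) + 1) * c)) • (A ^ (i+1)) (A (x 0) - b))) := by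
            rw [sub_sub_cancel, smul_smul, inv_mul_cancel₀ hc'ne, one_smul]
          rw [heq2]
          apply Submodule.smul_mem
          apply Submodule.sub_mem
          · exact Submodule.subset_span ⟨⟨i+1, by omega⟩, rfl⟩
          · exact hVmono (i+1) (i+1+1) (by omega) (hKV hmem1)
  -- final part
  cases n with
  | zero =>
    have hxG0 : xG 0 = x 0 := by
      have h1 := hGmem 0
      simp only [Set.range_eq_empty, Submodule.span_empty, Submodule.mem_bot] at h1
      rwa [sub_eq_zero] at h1
    have hres0 : A (x 1) - b =
        ((1 : EuclideanSpace ℝ (Fin N) →L[ℝ] EuclideanSpace ℝ (Fin N)) - A)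
          (A (x 0) - b) := by
      rw [hx1]
      simp only [map_sub, ContinuousLinearMap.sub_apply, ContinuousLinearMap.one_apply]
      abel
    rw [hres0, hxG0]
    have h2 := ContinuousLinearMap.le_opNorm
      ((1 : EuclideanSpace ℝ (Fin N) →L[ℝ] EuclideanSpace ℝ (Fin N)) - A) (A (x 0) - b)
    have h3 : (0:ℝ) ≤ ‖(1 : EuclideanSpace ℝ (Fin N) →L[ℝ] EuclideanSpace ℝ (Fin N)) - A‖ :=
      norm_nonneg _
    have h4 : (0:ℝ) ≤ ‖A (x 0) - b‖ := norm_nonneg _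
    nlinarith [mul_nonneg h3 h4]
  | succ m =>
    obtain ⟨hvK, hKV, -⟩ := key m le_rfl
    set ρ := ‖(A (x (m+1)) - b) - ∑ j : Fin (m+1), z (m+1) j • A (x j.1 - x (j.1 + 1))‖
      with hρ
    have hρnn : 0 ≤ ρ := by rw [hρ]; exact norm_nonneg _
    have hm1 : 1 ≤ m + 1 := Nat.le_add_left 1 m
    -- GMRES comparison: ρ ≤ ‖A (xG (m+1)) - b‖
    have hGV : x (m+1) - xG (m+1) ∈ V (m+1) := by
      have h1 : xG (m+1) - x 0 ∈ K (m+1) := hGmem (m+1)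
      have h2 : x 0 - x (m+1) ∈ V (m+1) := by
        rw [hx0i (m+1)]
        exact Submodule.sum_mem _ (fun j _ => Submodule.subset_span ⟨j, rfl⟩)
      have h3 : x (m+1) - xG (m+1) = -((xG (m+1) - x 0) + (x 0 - x (m+1))) := by abel
      rw [h3]
      exact Submodule.neg_mem _ (Submodule.add_mem _ (hKV h1) h2)
    have hGV' : x (m+1) - xG (m+1) ∈
        Submodule.span ℝ (Set.range fun j : Fin (m+1) => (x j.1 - x (j.1 + 1))) := hGV
    obtain ⟨y, hy⟩ := (Submodule.mem_span_range_iff_exists_fun ℝ).mp hGV'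
    have hxGeq : A (xG (m+1)) - b =
        (A (x (m+1)) - b) - ∑ j : Fin (m+1), y j • A (x j.1 - x (j.1 + 1)) := by
      have h5 : xG (m+1) = x (m+1) - ∑ j : Fin (m+1), y j • (x j.1 - x (j.1 + 1)) := by
        rw [hy]; abel
      rw [h5, map_sub, map_sum]
      simp only [map_smul]
      abel
    have hρle : ρ ≤ ‖A (xG (m+1)) - b‖ := by
      rw [hxGeq]
      rw [hρ]
      exact hmin (m+1) hm1 y
    -- safeguard bound: ‖f - ∑ z' w‖ ≤ (1+ε) ρ
    have hg' : ‖(A (x (m+1)) - b) - ∑ j : Fin (m+1), z' (m+1) j • A (x j.1 - x (j.1 + 1))‖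
        ≤ (1 + ε) * ρ := by
      have hlastval : ((Fin.last m : Fin (m+1)) : ℕ) = m := Fin.val_last m
      have hdiff : (∑ j : Fin (m+1), z' (m+1) j • A (x j.1 - x (j.1 + 1)))
          - (∑ j : Fin (m+1), z (m+1) j • A (x j.1 - x (j.1 + 1)))
          = (z' (m+1) (Fin.last m) - z (m+1) (Fin.last m)) • A (x m - x (m+1)) := by
        rw [← Finset.sum_sub_distrib]
        simp only [← sub_smul]
        rw [Finset.sum_eq_single (Fin.last m)]
        · simp
        · intro j _ hj
          have hj2 : j.1 + 1 ≠ m + 1 := by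
            intro hc
            exact hj (Fin.ext (by omega))
          rw [hagree (m+1) hm1 j hj2]
          simp
        · intro hmm
          exact absurd (Finset.mem_univ _) hmm
      have hsplit : (A (x (m+1)) - b) - ∑ j : Fin (m+1), z' (m+1) j • A (x j.1 - x (j.1 + 1))
          = ((A (x (m+1)) - b) - ∑ j : Fin (m+1), z (m+1) j • A (x j.1 - x (j.1 + 1)))
            - (z' (m+1) (Fin.last m) - z (m+1) (Fin.last m)) • A (x m - x (m+1)) := by
        rw [← hdiff]; abel
      rw [hsplit]
      by_cases hw : A (x m - x (m+1)) = 0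
      · rcases hsafe (m+1) hm1 (Fin.last m) (by simp) with ⟨-, h2⟩
        rw [h2 (by simpa [hlastval] using hw)]
        simp only [sub_self, zero_smul, sub_zero]
        rw [← hρ]
        nlinarith
      · rcases hsafe (m+1) hm1 (Fin.last m) (by simp) with ⟨h1, -⟩
        obtain ⟨s, hs, hz', -⟩ := h1 (by simpa [hlastval] using hw)
        rw [← hρ] at hz'
        simp only [hlastval] at hz'
        have hwpos : 0 < ‖A (x m - x (m+1))‖ := norm_pos_iff.mpr hw
        have habs : ‖(z' (m+1) (Fin.last m) - z (m+1) (Fin.last m)) • A (x m - x (m+1))‖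
            = ε * ρ := by
          rw [norm_smul, Real.norm_eq_abs, hz']
          have he : z (m+1) (Fin.last m) + s * ε * ρ / ‖A (x m - x (m+1))‖
              - z (m+1) (Fin.last m) = s * ε * ρ / ‖A (x m - x (m+1))‖ := by ring
          rw [he, abs_div, abs_mul, abs_mul, abs_of_nonneg hρnn, abs_of_pos hε,
            abs_norm, div_mul_cancel₀ _ (ne_of_gt hwpos)]
          rcases hs with rfl | rfl <;> norm_num
        have hfinal := norm_sub_le
          ((A (x (m+1)) - b) - ∑ j : Fin (m+1), z (m+1) j • A (x j.1 - x (j.1 + 1)))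
          ((z' (m+1) (Fin.last m) - z (m+1) (Fin.last m)) • A (x m - x (m+1)))
        rw [habs, ← hρ] at hfinal
        have hrg : (1 + ε) * ρ = ρ + ε * ρ := by ring
        rw [hrg]
        linarith
    rw [hres (m+1) hm1]
    have h6 := ContinuousLinearMap.le_opNorm
      ((1 : EuclideanSpace ℝ (Fin N) →L[ℝ] EuclideanSpace ℝ (Fin N)) - A)
      ((A (x (m+1)) - b) - ∑ j : Fin (m+1), z' (m+1) j • A (x j.1 - x (j.1 + 1)))
    have h7 : (0:ℝ) ≤ ‖(1 : EuclideanSpace ℝ (Fin N) →L[ℝ] EuclideanSpace ℝ (Fin N)) - A‖ :=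
      norm_nonneg _
    have h8 : ‖(1 : EuclideanSpace ℝ (Fin N) →L[ℝ] EuclideanSpace ℝ (Fin N)) - A‖ *
        ‖(A (x (m+1)) - b) - ∑ j : Fin (m+1), z' (m+1) j • A (x j.1 - x (j.1 + 1))‖ ≤
        ‖(1 : EuclideanSpace ℝ (Fin N) →L[ℝ] EuclideanSpace ℝ (Fin N)) - A‖ * ((1+ε) * ρ) :=
      mul_le_mul_of_nonneg_left hg' h7
    have h9 : ‖(1 : EuclideanSpace ℝ (Fin N) →L[ℝ] EuclideanSpace ℝ (Fin N)) - A‖ * ((1+ε) * ρ)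
        ≤ ‖(1 : EuclideanSpace ℝ (Fin N) →L[ℝ] EuclideanSpace ℝ (Fin N)) - A‖ *
          ((1+ε) * ‖A (xG (m+1)) - b‖) :=
      mul_le_mul_of_nonneg_left (mul_le_mul_of_nonneg_left hρle (by linarith)) h7
    have h10 : ‖(1 : EuclideanSpace ℝ (Fin N) →L[ℝ] EuclideanSpace ℝ (Fin N)) - A‖ *
        ((1+ε) * ‖A (xG (m+1)) - b‖)
        = (1+ε) * ‖(1 : EuclideanSpace ℝ (Fin N) →L[ℝ] EuclideanSpace ℝ (Fin N)) - A‖ *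
          ‖A (xG (m+1)) - b‖ := by ring
    linarith
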